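/- Let 0 < σ ≤ τ, let K := ⌈2τ/σ⌉ (the smallest integer with Kσ ≥ 2τ), and let β > 0. Then for every solution of the delayed Hegselmann–Krause system, the Lyapunov–Krasovskii functional satisfies F(t) ≤ 𝒵^K_σ · Δ^0_x for all t ∈ [0, 2τ]. -/

import Mathlib

open scoped BigOperators
open MeasureTheory

/-- Diameter of the agent configuration at time `t`. -/
noncomputable def hkDiam {N d : ℕ} (x : Fin N → ℝ → EuclideanSpace ℝ (Fin d)) (t : ℝ) : ℝ :=
  ⨆ i : Fin N, ⨆ j : Fin N, ‖x i t - x j t‖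

/-- Maximum of the norms of the derivatives at time `t`. -/
noncomputable def hkMaxDer {N d : ℕ} (x' : Fin N → ℝ → EuclideanSpace ℝ (Fin d)) (t : ℝ) : ℝ :=
  ⨆ i : Fin N, ‖x' i t‖

/-- Lyapunov–Krasovskii functional
`F(t) = d_x(t) + β ∫_{max(0,t-2τ)}^t e^{-(t-s)} ∫_s^t max_i |ẋ_i(r)| dr ds`. -/
noncomputable def hkF {N d : ℕ} (β τ : ℝ)
    (x x' : Fin N → ℝ → EuclideanSpace ℝ (Fin d)) (t : ℝ) : ℝ :=
  hkDiam x t +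
    β * ∫ s in (max 0 (t - 2 * τ))..t, Real.exp (-(t - s)) * ∫ r in s..t, hkMaxDer x' r

/-- `Δ^0_x = max_{i,j} max_{s,t ∈ [-τ,0]} |x_i(s) - x_j(t)|`. -/
noncomputable def hkDelta0 {N d : ℕ} (τ : ℝ)
    (x : Fin N → ℝ → EuclideanSpace ℝ (Fin d)) : ℝ :=
  ⨆ i : Fin N, ⨆ j : Fin N, ⨆ s : Set.Icc (-τ) (0:ℝ), ⨆ t : Set.Icc (-τ) (0:ℝ),
    ‖x i s - x j t‖

/-- Closed-form sequence `Z^k_σ`. -/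
noncomputable def hkZ (σ : ℝ) (k : ℕ) : ℝ :=
  (((1 + σ) + Real.sqrt (σ * (1 + σ))) ^ (k + 1)
    - ((1 + σ) - Real.sqrt (σ * (1 + σ))) ^ (k + 1)) / (2 * Real.sqrt (σ * (1 + σ)))

/-- `𝒵^K_σ = Z^K_σ + Z^{K-1}_σ · β (1 - (1+2τ) e^{-2τ})`. -/
noncomputable def hkCalZ (σ τ β : ℝ) (K : ℕ) : ℝ :=
  hkZ σ K + hkZ σ (K - 1) * (β * (1 - (1 + 2 * τ) * Real.exp (-(2 * τ))))

/-- `(1+2σ)^k ≤ Z^k_σ`. -/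
lemma hkZ_ge (σ : ℝ) (hσ : 0 < σ) (k : ℕ) : (1 + 2 * σ) ^ k ≤ hkZ σ k := by
  set r := Real.sqrt (σ * (1 + σ)) with hrdef
  have hr0 : 0 < r := Real.sqrt_pos.mpr (by positivity)
  have hr2 : r ^ 2 = σ * (1 + σ) := Real.sq_sqrt (by positivity)
  have hrσ : σ ≤ r := by nlinarith
  have hrlt : r < 1 + σ := by nlinarith
  unfold hkZ
  rw [le_div_iff₀ (by positivity)]
  have h1 : (1 + 2 * σ : ℝ) ≤ 1 + σ + r := by linarith
  have h2 : (0:ℝ) < 1 + σ - r := by linarith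
  have h3 : (1 + 2 * σ : ℝ) ^ k ≤ (1 + σ + r) ^ k :=
    pow_le_pow_left₀ (by positivity) h1 k
  have h4 : (1 + σ - r) ^ k ≤ (1 + σ + r) ^ k :=
    pow_le_pow_left₀ h2.le (by linarith) k
  have h5 : (1 + σ - r) ^ (k + 1) ≤ (1 + σ + r) ^ k * (1 + σ - r) := by
    rw [pow_succ]
    exact mul_le_mul_of_nonneg_right h4 h2.le
  have h6 : (1 + σ + r) ^ k * (2 * r)
      ≤ (1 + σ + r) ^ (k + 1) - (1 + σ - r) ^ (k + 1) := by
    rw [pow_succ]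
    nlinarith [h5]
  calc (1 + 2 * σ : ℝ) ^ k * (2 * r) ≤ (1 + σ + r) ^ k * (2 * r) := by
        exact mul_le_mul_of_nonneg_right h3 (by positivity)
    _ ≤ _ := h6

/-- `(1+b)e^{-b} ≤ (1+a)e^{-a}` for `0 ≤ a ≤ b`. -/
lemma hk_exp_antitone {a b : ℝ} (ha : 0 ≤ a) (hab : a ≤ b) :
    (1 + b) * Real.exp (-b) ≤ (1 + a) * Real.exp (-a) := by
  have h := Real.add_one_le_exp (b - a)
  have key : Real.exp (-a) = Real.exp (b - a) * Real.exp (-b) := by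
    rw [← Real.exp_add]; ring_nf
  have hb : 0 < Real.exp (-b) := Real.exp_pos _
  nlinarith [mul_nonneg (mul_nonneg ha (sub_nonneg.mpr hab)) hb.le,
    mul_le_mul_of_nonneg_right h hb.le]

theorem stmt_11
    (N d : ℕ) (hN : 2 ≤ N) (hd : 1 ≤ d)
    (σ τ : ℝ) (hσ : 0 < σ) (hστ : σ ≤ τ)
    (K : ℕ) (hK : K = ⌈2 * τ / σ⌉₊)
    (β : ℝ) (hβ : 0 < β)
    (ψ : ℝ → ℝ)
    (hψpos : ∀ s, 0 ≤ s → 0 < ψ s)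
    (hψcont : ContinuousOn ψ (Set.Ici 0))
    (hψmono : ∀ s t, 0 ≤ s → s ≤ t → ψ t ≤ ψ s)
    (hψbdd : ∀ s, 0 ≤ s → ψ s ≤ 1)
    (x x' : Fin N → ℝ → EuclideanSpace ℝ (Fin d))
    (hxc : ∀ i, ContinuousOn (x i) (Set.Ici (-τ)))
    (hder : ∀ i, ∀ t > (0:ℝ), HasDerivAt (x i) (x' i t) t)
    (hode : ∀ i, ∀ t > (0:ℝ),
      x' i t = ∑ j ∈ Finset.univ.erase i,
        (ψ ‖x i (t - σ) - x j (t - τ)‖ / (N - 1)) • (x j (t - τ) - x i (t - σ))) :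
    ∀ t ∈ Set.Icc (0:ℝ) (2 * τ), hkF β τ x x' t ≤ hkCalZ σ τ β K * hkDelta0 τ x := by
  intro t ht
  obtain ⟨ht0, ht2⟩ := ht
  have hτ : 0 < τ := lt_of_lt_of_le hσ hστ
  have hN2 : (2:ℝ) ≤ (N:ℝ) := by exact_mod_cast hN
  have hNpos : (0:ℝ) < (N:ℝ) - 1 := by linarith
  haveI hNe : Nonempty (Fin N) := ⟨⟨0, by omega⟩⟩
  haveI hIccNe : Nonempty (Set.Icc (-τ) (0:ℝ)) :=
    (Set.nonempty_Icc.mpr (by linarith)).to_subtype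
  set Δ := hkDelta0 τ x with hΔdef
  -- boundedness of x on [-τ, 0]
  have hbd : ∀ i : Fin N, ∃ C, ∀ s ∈ Set.Icc (-τ) (0:ℝ), ‖x i s‖ ≤ C := by
    intro i
    have hc : ContinuousOn (fun s => ‖x i s‖) (Set.Icc (-τ) (0:ℝ)) :=
      ((hxc i).mono Set.Icc_subset_Ici_self).norm
    obtain ⟨z, _, hz⟩ := isCompact_Icc.exists_isMaxOn
      (Set.nonempty_Icc.mpr (by linarith)) hc
    exact ⟨‖x i z‖, fun s hs => hz hs⟩
  have pairB : ∀ i j : Fin N, ∃ B, ∀ s ∈ Set.Icc (-τ) (0:ℝ), ∀ u ∈ Set.Icc (-τ) (0:ℝ),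
      ‖x i s - x j u‖ ≤ B := by
    intro i j
    obtain ⟨C₁, h1⟩ := hbd i
    obtain ⟨C₂, h2⟩ := hbd j
    exact ⟨C₁ + C₂, fun s hs u hu =>
      (norm_sub_le _ _).trans (add_le_add (h1 s hs) (h2 u hu))⟩
  -- key: any pairwise distance with times in [-τ,0] is ≤ Δ
  have hΔle : ∀ (i j : Fin N) (s u : ℝ), s ∈ Set.Icc (-τ) (0:ℝ) → u ∈ Set.Icc (-τ) (0:ℝ) →
      ‖x i s - x j u‖ ≤ Δ := by
    intro i j s u hs hu
    obtain ⟨B, hB⟩ := pairB i j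
    have h4 : ∀ s' : Set.Icc (-τ) (0:ℝ),
        ‖x i s - x j u‖ ≤ ⨆ u' : Set.Icc (-τ) (0:ℝ), ‖x i (s':ℝ) - x j u'‖ → True := fun _ _ => trivial
    have bdd4 : ∀ s' : Set.Icc (-τ) (0:ℝ),
        BddAbove (Set.range fun u' : Set.Icc (-τ) (0:ℝ) => ‖x i (s':ℝ) - x j u'‖) := by
      intro s'
      exact ⟨B, by rintro y ⟨u', rfl⟩; exact hB s' s'.2 u' u'.2⟩
    have step4 : ‖x i s - x j u‖ ≤ ⨆ u' : Set.Icc (-τ) (0:ℝ), ‖x i s - x j u'‖ := by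
      have := le_ciSup (bdd4 ⟨s, hs⟩) (⟨u, hu⟩ : Set.Icc (-τ) (0:ℝ))
      simpa using this
    have bdd3 : BddAbove (Set.range fun s' : Set.Icc (-τ) (0:ℝ) =>
        ⨆ u' : Set.Icc (-τ) (0:ℝ), ‖x i (s':ℝ) - x j u'‖) := by
      refine ⟨B, ?_⟩
      rintro y ⟨s', rfl⟩
      exact ciSup_le fun u' => hB s' s'.2 u' u'.2
    have step3 : (⨆ u' : Set.Icc (-τ) (0:ℝ), ‖x i s - x j u'‖)
        ≤ ⨆ s' : Set.Icc (-τ) (0:ℝ), ⨆ u' : Set.Icc (-τ) (0:ℝ), ‖x i (s':ℝ) - x j u'‖ := by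
      have := le_ciSup bdd3 (⟨s, hs⟩ : Set.Icc (-τ) (0:ℝ))
      simpa using this
    have step2 : (⨆ s' : Set.Icc (-τ) (0:ℝ), ⨆ u' : Set.Icc (-τ) (0:ℝ), ‖x i (s':ℝ) - x j u'‖)
        ≤ ⨆ j' : Fin N, ⨆ s' : Set.Icc (-τ) (0:ℝ), ⨆ u' : Set.Icc (-τ) (0:ℝ),
            ‖x i (s':ℝ) - x j' u'‖ :=
      le_ciSup (f := fun j' : Fin N => ⨆ s' : Set.Icc (-τ) (0:ℝ),
        ⨆ u' : Set.Icc (-τ) (0:ℝ), ‖x i (s':ℝ) - x j' u'‖)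
        (Set.Finite.bddAbove (Set.finite_range _)) j
    have step1 : (⨆ j' : Fin N, ⨆ s' : Set.Icc (-τ) (0:ℝ), ⨆ u' : Set.Icc (-τ) (0:ℝ),
            ‖x i (s':ℝ) - x j' u'‖) ≤ Δ :=
      le_ciSup (f := fun i' : Fin N => ⨆ j' : Fin N, ⨆ s' : Set.Icc (-τ) (0:ℝ),
        ⨆ u' : Set.Icc (-τ) (0:ℝ), ‖x i' (s':ℝ) - x j' u'‖)
        (Set.Finite.bddAbove (Set.finite_range _)) i
    exact step4.trans (step3.trans (step2.trans step1))
  have hΔ0 : 0 ≤ Δ := by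
    have := hΔle (Classical.arbitrary _) (Classical.arbitrary _) (-τ) (-τ)
      ⟨le_rfl, by linarith⟩ ⟨le_rfl, by linarith⟩
    simpa using this
  -- mean value estimate allowing the left endpoint to be non-differentiable
  have move : ∀ (i : Fin N) (a b C : ℝ), 0 ≤ a → a ≤ b → 0 ≤ C →
      (∀ r ∈ Set.Ioc a b, ‖x' i r‖ ≤ C) → ‖x i b - x i a‖ ≤ C * (b - a) := by
    intro i a b C ha hab hC hbound
    rcases eq_or_lt_of_le hab with rfl | hlt
    · simp
    have key : ∀ ε ∈ Set.Ioc (0:ℝ) (b - a), ‖x i b - x i (a + ε)‖ ≤ C * (b - a - ε) := by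
      intro ε hε
      have hsub : a + ε ≤ b := by linarith [hε.2]
      have hd : ∀ u ∈ Set.Icc (a + ε) b, HasDerivWithinAt (x i) (x' i u) (Set.Icc (a + ε) b) u :=
        fun u hu => (hder i u (by linarith [hu.1, hε.1])).hasDerivWithinAt
      have hb : ∀ u ∈ Set.Icc (a + ε) b, ‖x' i u‖ ≤ C := fun u hu =>
        hbound u ⟨by linarith [hu.1, hε.1], hu.2⟩
      have := (convex_Icc (a + ε) b).norm_image_sub_le_of_norm_hasDerivWithin_le hd hb
        (Set.left_mem_Icc.mpr hsub) (Set.right_mem_Icc.mpr hsub)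
      calc ‖x i b - x i (a + ε)‖ ≤ C * ‖b - (a + ε)‖ := this
        _ = C * (b - a - ε) := by
            rw [Real.norm_eq_abs, abs_of_nonneg (by linarith)]; ring_nf
    have hcont : ContinuousAt (x i) a :=
      (hxc i).continuousAt (Ici_mem_nhds (by linarith))
    have htend : Filter.Tendsto (fun ε : ℝ => ‖x i b - x i (a + ε)‖) (nhdsWithin 0 (Set.Ioi 0))
        (nhds ‖x i b - x i a‖) := by
      have h1 : Filter.Tendsto (fun ε : ℝ => a + ε) (nhds 0) (nhds a) := by
        simpa using (Filter.tendsto_id (x := nhds (0:ℝ))).const_add a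
      have h2 : Filter.Tendsto (fun ε : ℝ => x i (a + ε)) (nhds 0) (nhds (x i a)) :=
        hcont.tendsto.comp h1
      exact ((tendsto_const_nhds.sub h2).norm).mono_left nhdsWithin_le_nhds
    refine le_of_tendsto htend ?_
    filter_upwards [Ioc_mem_nhdsGT (by linarith : (0:ℝ) < b - a)] with ε hε
    calc ‖x i b - x i (a + ε)‖ ≤ C * (b - a - ε) := key ε hε
      _ ≤ C * (b - a) := by nlinarith [hε.1]
  -- speed bound from the ODE
  have speed : ∀ (Q r : ℝ), 0 < r →
      (∀ i j : Fin N, ‖x i (r - σ) - x j (r - τ)‖ ≤ Q) → ∀ i, ‖x' i r‖ ≤ Q := by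
    intro Q r hr hb i
    have hQ0 : 0 ≤ Q := le_trans (norm_nonneg _) (hb i i)
    rw [hode i r hr]
    calc ‖∑ j ∈ Finset.univ.erase i,
          (ψ ‖x i (r - σ) - x j (r - τ)‖ / ((N:ℝ) - 1)) • (x j (r - τ) - x i (r - σ))‖
        ≤ ∑ j ∈ Finset.univ.erase i,
          ‖(ψ ‖x i (r - σ) - x j (r - τ)‖ / ((N:ℝ) - 1)) • (x j (r - τ) - x i (r - σ))‖ :=
        norm_sum_le _ _
      _ ≤ ∑ _j ∈ Finset.univ.erase i, Q / ((N:ℝ) - 1) := by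
          refine Finset.sum_le_sum fun j _ => ?_
          rw [norm_smul, Real.norm_eq_abs]
          have hψnn : 0 ≤ ψ ‖x i (r - σ) - x j (r - τ)‖ :=
            (hψpos _ (norm_nonneg _)).le
          have hψ1 : ψ ‖x i (r - σ) - x j (r - τ)‖ ≤ 1 := hψbdd _ (norm_nonneg _)
          have hv : ‖x j (r - τ) - x i (r - σ)‖ ≤ Q := by
            rw [norm_sub_rev]; exact hb i j
          rw [abs_of_nonneg (by positivity)]
          calc ψ ‖x i (r - σ) - x j (r - τ)‖ / ((N:ℝ) - 1) * ‖x j (r - τ) - x i (r - σ)‖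
              ≤ 1 / ((N:ℝ) - 1) * Q := by
                refine mul_le_mul ?_ hv (norm_nonneg _) (by positivity)
                exact (div_le_div_iff_of_pos_right hNpos).mpr hψ1
            _ = Q / ((N:ℝ) - 1) := by ring
      _ = Q := by
          rw [Finset.sum_const, Finset.card_erase_of_mem (Finset.mem_univ i),
            Finset.card_univ, Fintype.card_fin, nsmul_eq_mul]
          rw [Nat.cast_sub (by omega), Nat.cast_one]
          field_simp
  -- the bootstrap estimate
  have H : ∀ k : ℕ, ∀ (i j : Fin N) (s u : ℝ), s ∈ Set.Icc (-τ) ((k:ℝ) * σ) →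
      u ∈ Set.Icc (-τ) ((k:ℝ) * σ) → ‖x i s - x j u‖ ≤ (1 + 2 * σ) ^ k * Δ := by
    intro k
    induction k with
    | zero =>
      intro i j s u hs hu
      simp only [Nat.cast_zero, zero_mul] at hs hu
      simp only [pow_zero, one_mul]
      exact hΔle i j s u hs hu
    | succ k ih =>
      intro i j s u hs hu
      have hkcast : ((k+1:ℕ):ℝ) = (k:ℝ) + 1 := by push_cast; ring
      rw [hkcast] at hs hu
      have hkσ0 : 0 ≤ (k:ℝ) * σ := by positivity
      set Q := (1 + 2 * σ) ^ k * Δ with hQ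
      have hQ0 : 0 ≤ Q := mul_nonneg (by positivity) hΔ0
      have hderb : ∀ r, (k:ℝ) * σ < r → r ≤ ((k:ℝ) + 1) * σ → ∀ i' : Fin N, ‖x' i' r‖ ≤ Q := by
        intro r hr1 hr2 i'
        refine speed Q r (lt_of_le_of_lt hkσ0 hr1) (fun a b => ?_) i'
        refine ih a b (r - σ) (r - τ) ⟨by linarith, by linarith⟩ ⟨by linarith, by linarith⟩
      have hmove : ∀ (i' : Fin N) (v : ℝ), v ∈ Set.Icc (-τ) (((k:ℝ) + 1) * σ) →
          ‖x i' v - x i' (min v ((k:ℝ) * σ))‖ ≤ σ * Q := by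
        intro i' v hv
        rcases le_or_gt v ((k:ℝ) * σ) with h | h
        · rw [min_eq_left h]
          simpa using mul_nonneg hσ.le hQ0
        · rw [min_eq_right h.le]
          have := move i' ((k:ℝ) * σ) v Q hkσ0 h.le hQ0
            (fun r hr => hderb r hr.1 (le_trans hr.2 hv.2) i')
          calc ‖x i' v - x i' ((k:ℝ) * σ)‖ ≤ Q * (v - (k:ℝ) * σ) := this
            _ ≤ Q * σ := mul_le_mul_of_nonneg_left (by linarith [hv.2]) hQ0
            _ = σ * Q := by ring
      have hmemS : min s ((k:ℝ) * σ) ∈ Set.Icc (-τ) ((k:ℝ) * σ) :=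
        ⟨le_min hs.1 (by linarith), min_le_right _ _⟩
      have hmemU : min u ((k:ℝ) * σ) ∈ Set.Icc (-τ) ((k:ℝ) * σ) :=
        ⟨le_min hu.1 (by linarith), min_le_right _ _⟩
      have tri : ‖x i s - x j u‖ ≤ ‖x i s - x i (min s ((k:ℝ) * σ))‖
          + ‖x i (min s ((k:ℝ) * σ)) - x j (min u ((k:ℝ) * σ))‖
          + ‖x j (min u ((k:ℝ) * σ)) - x j u‖ := by
        have := dist_triangle4 (x i s) (x i (min s ((k:ℝ) * σ)))
          (x j (min u ((k:ℝ) * σ))) (x j u)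
        simpa [dist_eq_norm] using this
      have hlast : ‖x j (min u ((k:ℝ) * σ)) - x j u‖ ≤ σ * Q := by
        rw [norm_sub_rev]; exact hmove j u hu
      calc ‖x i s - x j u‖ ≤ σ * Q + Q + σ * Q := by
            have h1 := hmove i s hs
            have h2 := ih i j _ _ hmemS hmemU
            linarith [tri, h1, h2, hlast]
        _ = (1 + 2 * σ) ^ (k + 1) * Δ := by rw [hQ, pow_succ]; ring
  -- parameters
  have hKle : 2 * τ ≤ (K:ℝ) * σ := by
    have h1 : 2 * τ / σ ≤ (K:ℝ) := hK ▸ Nat.le_ceil _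
    calc 2 * τ = 2 * τ / σ * σ := by field_simp
      _ ≤ (K:ℝ) * σ := mul_le_mul_of_nonneg_right h1 hσ.le
  have hK1 : 1 ≤ K := by
    rw [hK]; exact Nat.one_le_ceil_iff.mpr (by positivity)
  have hKm1 : ((K - 1 : ℕ):ℝ) = (K:ℝ) - 1 := by
    rw [Nat.cast_sub hK1, Nat.cast_one]
  have hK1σ : 2 * τ - σ ≤ ((K - 1 : ℕ):ℝ) * σ := by
    rw [hKm1]; nlinarith
  set Q' := (1 + 2 * σ) ^ (K - 1) * Δ with hQ'def
  have hQ'0 : 0 ≤ Q' := mul_nonneg (by positivity) hΔ0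
  have hspeed2 : ∀ r ∈ Set.Ioc (0:ℝ) (2 * τ), ∀ i : Fin N, ‖x' i r‖ ≤ Q' := by
    intro r hr i
    refine speed Q' r hr.1 (fun a b => ?_) i
    refine H (K - 1) a b (r - σ) (r - τ)
      ⟨by linarith [hr.1], by linarith [hr.2]⟩ ⟨by linarith [hr.1], by linarith [hr.2]⟩
  have hmaxle : ∀ r ∈ Set.Ioc (0:ℝ) (2 * τ), hkMaxDer x' r ≤ Q' := by
    intro r hr
    exact ciSup_le fun i => hspeed2 r hr i
  have hmaxnn : ∀ r : ℝ, 0 ≤ hkMaxDer x' r := by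
    intro r
    have := le_ciSup (Set.Finite.bddAbove (Set.finite_range fun i : Fin N => ‖x' i r‖))
      (Classical.arbitrary (Fin N))
    exact le_trans (norm_nonneg _) this
  -- diameter bound
  have hdiam : hkDiam x t ≤ (1 + 2 * σ) ^ K * Δ := by
    refine ciSup_le fun i => ciSup_le fun j => ?_
    exact H K i j t t ⟨by linarith, by linarith⟩ ⟨by linarith, by linarith⟩
  -- inner integral bound
  have hIbd : ∀ s ∈ Set.Icc (0:ℝ) t, (∫ r in s..t, hkMaxDer x' r) ≤ Q' * (t - s) := by
    intro s hs
    have hb : ∀ r ∈ Set.uIoc s t, ‖hkMaxDer x' r‖ ≤ Q' := by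
      intro r hr
      rw [Set.uIoc_of_le hs.2] at hr
      rw [Real.norm_eq_abs, abs_of_nonneg (hmaxnn r)]
      exact hmaxle r ⟨lt_of_le_of_lt hs.1 hr.1, le_trans hr.2 ht2⟩
    have := intervalIntegral.norm_integral_le_of_norm_le_const hb
    rw [Real.norm_eq_abs] at this
    calc (∫ r in s..t, hkMaxDer x' r) ≤ |∫ r in s..t, hkMaxDer x' r| := le_abs_self _
      _ ≤ Q' * |t - s| := this
      _ = Q' * (t - s) := by rw [abs_of_nonneg (by linarith [hs.2])]
  -- integrability of the max of derivatives
  have hint : IntegrableOn (hkMaxDer x') (Set.uIcc 0 t) volume := by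
    rw [Set.uIcc_of_le ht0]
    set g : ℝ → ℝ := fun r =>
      Finset.univ.sup' Finset.univ_nonempty (fun i : Fin N => ‖deriv (x i) r‖) with hgdef
    have hg : Measurable g := by
      have hm := Finset.measurable_sup' (Finset.univ_nonempty (α := Fin N))
        (fun i _ => ((measurable_deriv (x i)).norm : Measurable fun r => ‖deriv (x i) r‖))
      have hgeq : g = Finset.univ.sup' Finset.univ_nonempty
          (fun i : Fin N => fun r => ‖deriv (x i) r‖) := by
        funext r
        rw [hgdef]
        simp [Finset.sup'_apply]
      rw [hgeq]
      exact hm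
    have h0 : ∀ᵐ r ∂(volume.restrict (Set.Icc (0:ℝ) t)), r ≠ 0 := by
      refine ae_restrict_of_ae ?_
      refine ae_iff.mpr ?_
      have : {r : ℝ | ¬ r ≠ 0} = {0} := by ext r; simp
      rw [this]; exact Real.volume_singleton
    have hmem := ae_restrict_mem (μ := volume) (measurableSet_Icc : MeasurableSet (Set.Icc (0:ℝ) t))
    have hae : hkMaxDer x' =ᵐ[volume.restrict (Set.Icc (0:ℝ) t)] g := by
      filter_upwards [h0, hmem] with r hr0 hrm
      have hrpos : 0 < r := lt_of_le_of_ne hrm.1 (Ne.symm hr0)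
      rw [hgdef]
      simp only [hkMaxDer]
      rw [← Finset.sup'_univ_eq_ciSup]
      refine Finset.sup'_congr _ rfl fun i _ => ?_
      rw [(hder i r hrpos).deriv]
    refine Integrable.mono' (g := fun _ => Q') ?_ ?_ ?_
    · exact integrableOn_const measure_Icc_lt_top.ne
    · exact (hg.aestronglyMeasurable).congr hae.symm
    · filter_upwards [h0, hmem] with r hr0 hrm
      rw [Real.norm_eq_abs, abs_of_nonneg (hmaxnn r)]
      exact hmaxle r ⟨lt_of_le_of_ne hrm.1 (Ne.symm hr0), le_trans hrm.2 ht2⟩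
  have hIcont : ContinuousOn (fun s => ∫ r in s..t, hkMaxDer x' r) (Set.uIcc 0 t) :=
    intervalIntegral.continuousOn_primitive_interval_left hint
  -- outer integrand
  have hfint : IntervalIntegrable
      (fun s => Real.exp (-(t - s)) * ∫ r in s..t, hkMaxDer x' r) volume 0 t := by
    refine ContinuousOn.intervalIntegrable ?_
    exact ((Real.continuous_exp.comp (continuous_const.sub continuous_id).neg).continuousOn).mul
      hIcont
  have hgint : IntervalIntegrable
      (fun s => Real.exp (-(t - s)) * (Q' * (t - s))) volume 0 t := by
    refine Continuous.intervalIntegrable ?_ _ _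
    exact (Real.continuous_exp.comp (continuous_const.sub continuous_id).neg).mul
      (continuous_const.mul (continuous_const.sub continuous_id))
  have houter1 : (∫ s in (0:ℝ)..t, Real.exp (-(t - s)) * ∫ r in s..t, hkMaxDer x' r)
      ≤ ∫ s in (0:ℝ)..t, Real.exp (-(t - s)) * (Q' * (t - s)) := by
    refine intervalIntegral.integral_mono_on ht0 hfint hgint fun s hs => ?_
    exact mul_le_mul_of_nonneg_left (hIbd s hs) (Real.exp_pos _).le
  -- compute the model integral
  have hanti : ∀ s ∈ Set.uIcc (0:ℝ) t,
      HasDerivAt (fun v : ℝ => Q' * ((1 + (t - v)) * Real.exp (-(t - v))))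
        (Real.exp (-(t - s)) * (Q' * (t - s))) s := by
    intro s _
    have h1 : HasDerivAt (fun v : ℝ => -(t - v)) 1 s := by
      simpa using (hasDerivAt_id s).sub_const t
    have h2 : HasDerivAt (fun v : ℝ => Real.exp (-(t - v))) (Real.exp (-(t - s)) * 1) s :=
      h1.exp
    have h3 : HasDerivAt (fun v : ℝ => 1 + (t - v)) (-1) s := by
      simpa using ((hasDerivAt_id s).const_sub t).const_add 1
    have h4 := (h3.mul h2).const_mul Q'
    exact h4.congr_deriv (by ring)
  have hcalc : (∫ s in (0:ℝ)..t, Real.exp (-(t - s)) * (Q' * (t - s)))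
      = Q' * (1 - (1 + t) * Real.exp (-t)) := by
    rw [intervalIntegral.integral_eq_sub_of_hasDerivAt hanti hgint]
    simp
    ring
  have hmono2 : (1 + 2 * τ) * Real.exp (-(2 * τ)) ≤ (1 + t) * Real.exp (-t) :=
    hk_exp_antitone ht0 ht2
  have hfac : 0 ≤ 1 - (1 + 2 * τ) * Real.exp (-(2 * τ)) := by
    have := hk_exp_antitone (le_refl (0:ℝ)) (by linarith : (0:ℝ) ≤ 2 * τ)
    simpa using this
  have houter : (∫ s in (0:ℝ)..t, Real.exp (-(t - s)) * ∫ r in s..t, hkMaxDer x' r)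
      ≤ Q' * (1 - (1 + 2 * τ) * Real.exp (-(2 * τ))) := by
    refine le_trans houter1 ?_
    rw [hcalc]
    exact mul_le_mul_of_nonneg_left (by linarith) hQ'0
  -- assembling
  have hmax : max 0 (t - 2 * τ) = 0 := max_eq_left (by linarith)
  have hZK := hkZ_ge σ hσ K
  have hZK1 := hkZ_ge σ hσ (K - 1)
  have hfinal : hkF β τ x x' t ≤ hkCalZ σ τ β K * Δ := by
    unfold hkF hkCalZ
    rw [hmax]
    have h1 : hkDiam x t ≤ hkZ σ K * Δ :=
      hdiam.trans (mul_le_mul_of_nonneg_right hZK hΔ0)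
    have h2 : β * (∫ s in (0:ℝ)..t, Real.exp (-(t - s)) * ∫ r in s..t, hkMaxDer x' r)
        ≤ hkZ σ (K - 1) * (β * (1 - (1 + 2 * τ) * Real.exp (-(2 * τ)))) * Δ := by
      have hb1 : β * (∫ s in (0:ℝ)..t, Real.exp (-(t - s)) * ∫ r in s..t, hkMaxDer x' r)
          ≤ β * (Q' * (1 - (1 + 2 * τ) * Real.exp (-(2 * τ)))) :=
        mul_le_mul_of_nonneg_left houter hβ.le
      refine hb1.trans ?_
      rw [hQ'def]
      calc β * ((1 + 2 * σ) ^ (K - 1) * Δ * (1 - (1 + 2 * τ) * Real.exp (-(2 * τ))))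
          = (1 + 2 * σ) ^ (K - 1)
            * (β * (1 - (1 + 2 * τ) * Real.exp (-(2 * τ))) * Δ) := by ring
        _ ≤ hkZ σ (K - 1) * (β * (1 - (1 + 2 * τ) * Real.exp (-(2 * τ))) * Δ) :=
            mul_le_mul_of_nonneg_right hZK1
              (mul_nonneg (mul_nonneg hβ.le hfac) hΔ0)
        _ = hkZ σ (K - 1) * (β * (1 - (1 + 2 * τ) * Real.exp (-(2 * τ)))) * Δ := by ring
    calc hkDiam x t + β * ∫ s in (0:ℝ)..t, Real.exp (-(t - s)) * ∫ r in s..t, hkMaxDer x' r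
        ≤ hkZ σ K * Δ + hkZ σ (K - 1) * (β * (1 - (1 + 2 * τ) * Real.exp (-(2 * τ)))) * Δ :=
          add_le_add h1 h2
      _ = (hkZ σ K + hkZ σ (K - 1) * (β * (1 - (1 + 2 * τ) * Real.exp (-(2 * τ))))) * Δ := by
          ring
  exact hfinal
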